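/- Let k ≥ 3 be odd, and let p be a prime with p ≡ 1 (mod 4k). Then there are no integers x, y, z (positive or negative) with x² + y² + z^k = p^k and z ≡ 2k (mod 4k). -/

import Mathlib

lemma sq_mod4_aux (x : ℕ) : x ^ 2 % 4 = 0 ∨ x ^ 2 % 4 = 1 := by
  have h := Nat.pow_mod x 2 4
  have h4 : x % 4 < 4 := Nat.mod_lt _ (by norm_num)
  interval_cases h' : (x % 4) <;> omega

lemma exists_bad_prime (n : ℕ) (hn : n % 4 = 3) :
    ∃ q : ℕ, q.Prime ∧ q % 4 = 3 ∧ Odd (padicValNat q n) := by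
  by_contra h
  push_neg at h
  have hsum : ∃ x y : ℕ, n = x ^ 2 + y ^ 2 :=
    Nat.eq_sq_add_sq_iff.mpr fun q hq h3 => Nat.not_odd_iff_even.mp (h q (Nat.prime_of_mem_primeFactors hq) h3)
  obtain ⟨x, y, rfl⟩ := hsum
  have hx := sq_mod4_aux x
  have hy := sq_mod4_aux y
  omega

theorem no_rep_odd_k (k : ℕ) (hk : Odd k) (hk3 : 3 ≤ k) (p : ℕ) (hp : p.Prime)
    (hp1 : (p : ℤ) ≡ 1 [ZMOD (4 * k)]) :
    ¬ ∃ x y z : ℤ, z ≡ 2 * k [ZMOD (4 * k)] ∧ x ^ 2 + y ^ 2 + z ^ k = (p : ℤ) ^ k := by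
  rintro ⟨x, y, z, hz, heq⟩
  obtain ⟨j, hj⟩ := hk
  have hpdvd : (4 * (k : ℤ)) ∣ (1 : ℤ) - (p : ℤ) := hp1.dvd
  have hzdvd : (4 * (k : ℤ)) ∣ (2 * (k : ℤ)) - z := hz.dvd
  obtain ⟨a, ha⟩ := hpdvd
  obtain ⟨b, hb⟩ := hzdvd
  have h4p : ∃ c : ℤ, (1 : ℤ) - (p : ℤ) = 4 * c := ⟨k * a, by linarith [ha]⟩
  have h4z : ∃ e : ℤ, (2 * (k : ℤ)) - z = 4 * e := ⟨k * b, by linarith [hb]⟩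
  obtain ⟨c, hc⟩ := h4p
  obtain ⟨e, he⟩ := h4z
  have hp4 : p % 4 = 1 := by omega
  -- z ≠ p, z < p
  have hzp : z ≠ (p : ℤ) := by intro h; omega
  have hzle : z ≤ (p : ℤ) := by
    have hsq : (0 : ℤ) ≤ x ^ 2 + y ^ 2 := by positivity
    have hle : z ^ k ≤ (p : ℤ) ^ k := by linarith
    exact ((Odd.strictMono_pow (R := ℤ) ⟨j, hj⟩).le_iff_le).mp hle
  have hzlt : z < (p : ℤ) := lt_of_le_of_ne hzle hzp
  -- factorization p^k - z^k = S * d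
  set d : ℤ := (p : ℤ) - z with hd
  set S : ℤ := ∑ i ∈ Finset.range k, (p : ℤ) ^ i * z ^ (k - 1 - i) with hS
  have hfact : S * d = x ^ 2 + y ^ 2 := by
    rw [hS, hd, geom_sum₂_mul]
    linarith
  have hdpos : 0 < d := by omega
  have hmpos : 0 < x ^ 2 + y ^ 2 := by
    rcases lt_or_eq_of_le (show (0:ℤ) ≤ x ^ 2 + y ^ 2 by positivity) with h | h
    · exact h
    · exfalso
      have hzz : z ^ k = (p : ℤ) ^ k := by linarith
      exact hzp ((Odd.strictMono_pow (R := ℤ) ⟨j, hj⟩).injective hzz)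
  have hSpos : 0 < S := by
    rcases le_or_gt S 0 with h | h
    · nlinarith
    · exact h
  -- pass to naturals
  set dn : ℕ := d.toNat with hdn
  set Sn : ℕ := S.toNat with hSn
  have hdn' : (dn : ℤ) = d := Int.toNat_of_nonneg hdpos.le
  have hSn' : (Sn : ℤ) = S := Int.toNat_of_nonneg hSpos.le
  have hdn4 : dn % 4 = 3 := by omega
  obtain ⟨q, hq, hq4, hqodd⟩ := exists_bad_prime dn hdn4
  haveI : Fact q.Prime := ⟨hq⟩
  -- q ∣ d
  have hqd : (q : ℤ) ∣ d := by
    have h1 : q ∣ dn := by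
      by_contra h
      rw [padicValNat.eq_zero_of_not_dvd h] at hqodd
      exact (Nat.not_odd_iff_even.mpr Even.zero) hqodd
    rw [← hdn']
    exact_mod_cast h1
  -- q ∤ k
  have hkd1 : (k : ℤ) ∣ d - 1 := ⟨-4 * a + 4 * b - 2, by linear_combination -ha + hb⟩
  have hqk : ¬ (q : ℤ) ∣ (k : ℤ) := by
    intro h
    have h1 : (q : ℤ) ∣ 1 := by
      have h2 := dvd_sub hqd (h.trans hkd1)
      simpa using h2
    have h3 := Int.le_of_dvd one_pos h1
    have h4 := hq.two_le
    omega
  -- q ∤ p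
  have hqp : ¬ (q : ℤ) ∣ (p : ℤ) := by
    intro h
    have h1 : q ∣ p := by exact_mod_cast h
    rcases hp.eq_one_or_self_of_dvd q h1 with h2 | h2
    · exact hq.one_lt.ne' h2
    · omega
  -- q ∤ S
  have hqS : ¬ (q : ℤ) ∣ S := by
    intro h
    have hzq : ((z : ZMod q)) = ((p : ZMod q)) := by
      have h0 : ((d : ZMod q)) = 0 := by
        rw [ZMod.intCast_zmod_eq_zero_iff_dvd]; exact hqd
      rw [hd] at h0
      push_cast at h0
      linear_combination -h0
    have hS0 : ((S : ZMod q)) = 0 := by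
      rw [ZMod.intCast_zmod_eq_zero_iff_dvd]; exact h
    rw [hS] at hS0
    push_cast at hS0
    rw [hzq] at hS0
    have hsum : ∑ i ∈ Finset.range k, ((p : ZMod q)) ^ i * ((p : ZMod q)) ^ (k - 1 - i)
        = (k : ZMod q) * ((p : ZMod q)) ^ (k - 1) := by
      rw [Finset.sum_congr rfl fun i hi => ?_, Finset.sum_const, nsmul_eq_mul,
        Finset.card_range]
      rw [← pow_add]
      congr 1
      have := Finset.mem_range.mp hi
      omega
    rw [hsum] at hS0
    rcases mul_eq_zero.mp hS0 with h1 | h1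
    · have : q ∣ k := (ZMod.natCast_eq_zero_iff k q).mp h1
      exact hqk (by exact_mod_cast this)
    · have h2 : ((p : ZMod q)) = 0 := pow_eq_zero_iff (by omega) |>.mp h1
      have : q ∣ p := (ZMod.natCast_eq_zero_iff p q).mp h2
      exact hqp (by exact_mod_cast this)
  -- contradiction via sum of two squares
  have hmeq : dn * Sn = x.natAbs ^ 2 + y.natAbs ^ 2 := by
    have h1 : ((dn * Sn : ℕ) : ℤ) = ((x.natAbs ^ 2 + y.natAbs ^ 2 : ℕ) : ℤ) := by
      push_cast [Int.natCast_natAbs]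
      rw [hdn', hSn', sq_abs, sq_abs]
      linarith [hfact]
    exact_mod_cast h1
  have heven : Even (padicValNat q (dn * Sn)) :=
    Nat.eq_sq_add_sq_iff.mp ⟨x.natAbs, y.natAbs, hmeq⟩ q (Nat.mem_primeFactors.mpr ⟨hq,
      Dvd.dvd.mul_right (by rw [← hdn'] at hqd; exact_mod_cast hqd) Sn,
      Nat.mul_ne_zero (by omega) (by omega)⟩) hq4
  have hodd : Odd (padicValNat q (dn * Sn)) := by
    have hdn0 : dn ≠ 0 := by omega
    have hSn0 : Sn ≠ 0 := by omega
    rw [padicValNat.mul hdn0 hSn0]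
    have hqSn : ¬ q ∣ Sn := by
      intro h
      apply hqS
      rw [← hSn']
      exact_mod_cast h
    rw [padicValNat.eq_zero_of_not_dvd hqSn]
    simpa using hqodd
  exact (Nat.not_odd_iff_even.mpr heven) hodd
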